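/- For every root ξ in the broad base T, the polynomial N_ξ (equal to the variable x_ξ if ξ ∈ M ∖ M', and to the minor M_ξ if ξ ∈ M') is invariant under the adjoint action of the unipotent radical U of the parabolic group P on K[m]. -/

import Mathlib

open scoped Matrix Classical
open MvPolynomial

/-- `Rsum r k = r 0 + ⋯ + r (k-1)`, the partial sum `R_k` of block sizes. -/
def Rsum (r : ℕ → ℕ) (k : ℕ) : ℕ := (Finset.range k).sum r

/-- Index of the diagonal block containing row/column `a` (0-indexed). -/
def blockOf (r : ℕ → ℕ) (s a : ℕ) : ℕ :=
  ((Finset.range s).filter fun k => Rsum r (k + 1) ≤ a).card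

/-- The set `M` of roots `(i,j)` of the nilradical `m`. -/
def Mset (r : ℕ → ℕ) (s n : ℕ) : Finset (Fin n × Fin n) :=
  Finset.univ.filter fun p => blockOf r s (p.1 : ℕ) < blockOf r s (p.2 : ℕ)

/-- `γ' > γ` iff `γ' − γ` is a positive root. -/
def rootGt {n : ℕ} (γ' γ : Fin n × Fin n) : Prop :=
  (γ'.1 = γ.1 ∧ γ.2 < γ'.2) ∨ (γ'.2 = γ.2 ∧ γ'.1 < γ.1)

/-- A base `S` of `M`: pairwise incomparable, and every root of `M ∖ S`
exceeds some element of `S`. -/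
def IsBase {n : ℕ} (M S : Finset (Fin n × Fin n)) : Prop :=
  S ⊆ M ∧
  (∀ ξ ∈ S, ∀ η ∈ S, ξ ≠ η → ¬rootGt ξ η ∧ ¬rootGt η ξ) ∧
  (∀ γ ∈ M, γ ∉ S → ∃ ξ ∈ S, rootGt γ ξ)

/-- `p` is a positive root of the reductive (block-diagonal) part `r`. -/
def inDr (r : ℕ → ℕ) (s : ℕ) {n : ℕ} (p : Fin n × Fin n) : Prop :=
  p.1 < p.2 ∧ blockOf r s (p.1 : ℕ) = blockOf r s (p.2 : ℕ)

/-- The coordinate ring `K[m]`: polynomials in the variables `x_ξ`, `ξ ∈ M`. -/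
abbrev Rpoly (K : Type) [Field K] (r : ℕ → ℕ) (s n : ℕ) : Type :=
  MvPolynomial {p : Fin n × Fin n // p ∈ Mset r s n} K

/-- The formal matrix `𝕏` of variables (zero outside `M`). -/
noncomputable def Xmat (K : Type) [Field K] (r : ℕ → ℕ) (s n : ℕ) :
    Matrix (Fin n) (Fin n) (Rpoly K r s n) :=
  Matrix.of fun i j => if h : (i, j) ∈ Mset r s n then MvPolynomial.X ⟨(i, j), h⟩ else 0

/-- The minor of a matrix on the ordered row set `I` and ordered column set `J`. -/
noncomputable def minorDet {n : ℕ} {A : Type} [CommRing A]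
    (X : Matrix (Fin n) (Fin n) A) (I J : Finset (Fin n)) : A :=
  if h : J.card = I.card then
    Matrix.det (Matrix.of fun p q : Fin I.card =>
      X (I.orderIsoOfFin rfl p).1 (J.orderIsoOfFin h q).1)
  else 0

/-- The minor `M_γ` attached to a root `γ = (a,b)`: rows `ord{a, i₁, …, i_k}`,
columns `ord{j₁, …, j_k, b}`, where `S_γ = {(i,j) ∈ S : i > a, j < b}`. -/
noncomputable def Mminor (K : Type) [Field K] (r : ℕ → ℕ) (s n : ℕ)
    (S : Finset (Fin n × Fin n)) (γ : Fin n × Fin n) : Rpoly K r s n :=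
  minorDet (Xmat K r s n)
    (insert γ.1 ((S.filter fun p => γ.1 < p.1 ∧ p.2 < γ.2).image Prod.fst))
    (insert γ.2 ((S.filter fun p => γ.1 < p.1 ∧ p.2 < γ.2).image Prod.snd))

/-- The polynomial `L_{φ_q}` for an admissible pair `q = (ξ, ξ')`:
`Σ_{α₁+α₂=α_q, α₁,α₂ ∈ Δ⁺_r ∪ {0}} M_{ξ+α₁} M_{α₂+ξ'}`. -/
noncomputable def Lpoly (K : Type) [Field K] (r : ℕ → ℕ) (s n : ℕ)
    (S : Finset (Fin n × Fin n)) (ξ ξ' : Fin n × Fin n) : Rpoly K r s n :=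
  ∑ m ∈ Finset.univ.filter (fun m : Fin n =>
      (m = ξ.2 ∨ inDr r s (ξ.2, m)) ∧ (m = ξ'.1 ∨ inDr r s (m, ξ'.1))),
    Mminor K r s n S (ξ.1, m) * Mminor K r s n S (m, ξ'.2)

/-- The set `Φ` of roots `φ_q = α_q + ξ'` attached to admissible pairs `q = (ξ, ξ')`. -/
noncomputable def PhiSet (r : ℕ → ℕ) (s n : ℕ) (S : Finset (Fin n × Fin n)) :
    Finset (Fin n × Fin n) :=
  ((S ×ˢ S).filter fun q => inDr r s (q.1.2, q.2.1)).image fun q => (q.1.2, q.2.2)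

/-- The adjoint action of `g` on `K[m]`: the substitution `x_ξ ↦ (g⁻¹ 𝕏 g)_ξ`,
so that `(g·f)(x) = f(g⁻¹ x g)`. -/
noncomputable def adjAct (K : Type) [Field K] (r : ℕ → ℕ) (s n : ℕ)
    (g : Matrix (Fin n) (Fin n) K) : Rpoly K r s n →ₐ[K] Rpoly K r s n :=
  MvPolynomial.aeval fun ξ : {p : Fin n × Fin n // p ∈ Mset r s n} =>
    ((g⁻¹).map (fun a => (MvPolynomial.C a : Rpoly K r s n)) * Xmat K r s n *
      g.map (fun a => (MvPolynomial.C a : Rpoly K r s n))) ξ.1.1 ξ.1.2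

/-- Upper unitriangular matrices: the group `N`. -/
def IsUnitriangular {K : Type} [Field K] {n : ℕ} (g : Matrix (Fin n) (Fin n) K) : Prop :=
  (∀ i, g i i = 1) ∧ ∀ i j : Fin n, j < i → g i j = 0

/-- Membership in the unipotent radical `U` of `P`: `g = I + u` with `u ∈ m`. -/
def InU {K : Type} [Field K] (r : ℕ → ℕ) (s n : ℕ) (g : Matrix (Fin n) (Fin n) K) : Prop :=
  (∀ i, g i i = 1) ∧ ∀ i j : Fin n, i ≠ j → (i, j) ∉ Mset r s n → g i j = 0

/-- The subalgebra of `K[m]` of polynomials invariant under the adjoint action of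
all elements of a set `G` of matrices. -/
noncomputable def invariantAlg (K : Type) [Field K] (r : ℕ → ℕ) (s n : ℕ)
    (G : Set (Matrix (Fin n) (Fin n) K)) : Subalgebra K (Rpoly K r s n) where
  carrier := {f | ∀ g ∈ G, adjAct K r s n g f = f}
  mul_mem' := fun ha hb g hg => by rw [map_mul, ha g hg, hb g hg]
  add_mem' := fun ha hb g hg => by rw [map_add, ha g hg, hb g hg]
  algebraMap_mem' := fun c g hg => (adjAct K r s n g).commutes c

/-- `M'`: the roots of `M` with `E_ξ ∈ m²`, i.e. not lying in a superdiagonal block. -/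
def Mprime (r : ℕ → ℕ) (s n : ℕ) : Finset (Fin n × Fin n) :=
  (Mset r s n).filter fun p => blockOf r s (p.1 : ℕ) + 1 < blockOf r s (p.2 : ℕ)

/-- The broad base `T`: roots `ξ ∈ S`, together with roots `ξ ∈ M` such that
`ξ > γ` for some `γ ∈ S` with `x_ξ`, `x_γ` in the same block `X_{i,j}`. -/
noncomputable def Tset (r : ℕ → ℕ) (s n : ℕ) (S : Finset (Fin n × Fin n)) :
    Finset (Fin n × Fin n) :=
  S ∪ (Mset r s n).filter fun ξ => ∃ γ ∈ S, rootGt ξ γ ∧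
    blockOf r s (ξ.1 : ℕ) = blockOf r s (γ.1 : ℕ) ∧
    blockOf r s (ξ.2 : ℕ) = blockOf r s (γ.2 : ℕ)

/-- The invariant `N_ξ`: the variable `x_ξ` for `ξ ∈ M ∖ M'`, the minor `M_ξ` for `ξ ∈ M'`. -/
noncomputable def Npoly (K : Type) [Field K] (r : ℕ → ℕ) (s n : ℕ)
    (S : Finset (Fin n × Fin n)) (ξ : Fin n × Fin n) : Rpoly K r s n :=
  if ξ ∈ Mprime r s n then Mminor K r s n S ξ
  else if h : ξ ∈ Mset r s n then MvPolynomial.X ⟨ξ, h⟩ else 0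

/-- A matrix lies in the nilradical `m`. -/
def memNilrad {K : Type} [Field K] (r : ℕ → ℕ) (s n : ℕ)
    (x : Matrix (Fin n) (Fin n) K) : Prop :=
  ∀ p : Fin n × Fin n, p ∉ Mset r s n → x p.1 p.2 = 0

/-- `W` is a Zariski-open subset of the affine space `m`. -/
def IsZariskiOpenIn (K : Type) [Field K] (r : ℕ → ℕ) (s n : ℕ)
    (W : Set (Matrix (Fin n) (Fin n) K)) : Prop :=
  ∃ I : Set (Rpoly K r s n),
    W = {x | memNilrad r s n x ∧ ∃ f ∈ I,
      MvPolynomial.eval (fun ξ : {p : Fin n × Fin n // p ∈ Mset r s n} => x ξ.1.1 ξ.1.2) f ≠ 0}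

section Stmt10Aux

variable {K : Type} [Field K] {n s : ℕ} {r : ℕ → ℕ}

lemma blockOf_mono (r : ℕ → ℕ) (s : ℕ) {a b : ℕ} (h : a ≤ b) :
    blockOf r s a ≤ blockOf r s b :=
  Finset.card_le_card (Finset.monotone_filter_right _ fun k _ hk => hk.trans h)

lemma lt_of_blockOf_lt {a b : Fin n} (h : blockOf r s (a : ℕ) < blockOf r s (b : ℕ)) :
    a < b := by
  by_contra hc
  push_neg at hc
  exact absurd (blockOf_mono r s (by exact_mod_cast hc)) (not_le.2 h)

lemma mem_Mset {p : Fin n × Fin n} :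
    p ∈ Mset r s n ↔ blockOf r s (p.1 : ℕ) < blockOf r s (p.2 : ℕ) := by
  simp [Mset]

lemma blockOf_lt_s (hsum : Rsum r s = n) (a : Fin n) : blockOf r s (a : ℕ) < s := by
  have hnpos : 0 < n := lt_of_le_of_lt (Nat.zero_le _) a.isLt
  have hspos : 0 < s := by
    by_contra hs
    push_neg at hs
    interval_cases s
    simp [Rsum] at hsum
    omega
  have hdef : ((Finset.range s).filter fun k => Rsum r (k + 1) ≤ (a : ℕ)).card =
      blockOf r s (a : ℕ) := rfl
  have hle : blockOf r s (a : ℕ) ≤ s := by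
    rw [← hdef]
    exact (Finset.card_filter_le _ _).trans (by simp)
  rcases lt_or_eq_of_le hle with h | h
  · exact h
  · exfalso
    have heq : ((Finset.range s).filter fun k => Rsum r (k + 1) ≤ (a : ℕ)) =
        Finset.range s :=
      Finset.eq_of_subset_of_card_le (Finset.filter_subset _ _)
        (by rw [Finset.card_range, hdef, h])
    have hmem : s - 1 ∈ (Finset.range s).filter fun k => Rsum r (k + 1) ≤ (a : ℕ) := by
      rw [heq]; exact Finset.mem_range.2 (by omega)
    have hfin : Rsum r (s - 1 + 1) ≤ (a : ℕ) := (Finset.mem_filter.1 hmem).2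
    rw [show s - 1 + 1 = s by omega, hsum] at hfin
    exact absurd a.isLt (by omega)

lemma s_pos (hsum : Rsum r s = n) (a : Fin n) : 0 < s :=
  Nat.pos_of_ne_zero fun h => by
    have := blockOf_lt_s (r := r) hsum a; omega

/-- Strictly block-upper matrices. -/
def SB (r : ℕ → ℕ) (s : ℕ) {n : ℕ} (x : Matrix (Fin n) (Fin n) K) : Prop :=
  ∀ i j : Fin n, ¬ blockOf r s (i : ℕ) < blockOf r s (j : ℕ) → x i j = 0

lemma SB_pow {x : Matrix (Fin n) (Fin n) K} (hx : SB r s x) :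
    ∀ (p : ℕ) (i j : Fin n), ¬ (blockOf r s (i : ℕ) + p ≤ blockOf r s (j : ℕ)) →
      (x ^ p) i j = 0 := by
  intro p
  induction p with
  | zero =>
    intro i j h
    have hij : i ≠ j := by rintro rfl; exact h (by omega)
    simp [Matrix.one_apply_ne hij]
  | succ p ih =>
    intro i j h
    rw [pow_succ, Matrix.mul_apply]
    refine Finset.sum_eq_zero fun k _ => ?_
    by_cases h1 : blockOf r s (i : ℕ) + p ≤ blockOf r s (k : ℕ)
    · by_cases h2 : blockOf r s (k : ℕ) < blockOf r s (j : ℕ)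
      · omega
      · rw [hx k j h2, mul_zero]
    · rw [ih i k h1, zero_mul]

lemma InU_inv (hsum : Rsum r s = n) {g : Matrix (Fin n) (Fin n) K} (hg : InU r s n g) :
    InU r s n g⁻¹ := by
  rcases Nat.eq_zero_or_pos n with hn | hn
  · exact ⟨fun i => absurd i.isLt (by omega), fun i _ _ _ => absurd i.isLt (by omega)⟩
  set u : Matrix (Fin n) (Fin n) K := g - 1 with hu
  have hSB : SB r s u := by
    intro i j hij
    by_cases hij' : i = j
    · subst hij'; simp [hu, hg.1 i]
    · have : g i j = 0 := hg.2 i j hij' fun hm => hij (mem_Mset.1 hm)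
      simp [hu, Matrix.one_apply_ne hij', this]
  have hSB' : SB r s (-u) := fun i j hij => by simp [hSB i j hij]
  have hnus : (-u) ^ s = 0 := by
    ext i j
    have hj := blockOf_lt_s (r := r) hsum j
    exact SB_pow hSB' s i j (by omega)
  set B : Matrix (Fin n) (Fin n) K := ∑ p ∈ Finset.range s, (-u) ^ p with hB
  have hg1 : g = 1 + u := by simp [hu]
  have hkey : g * B = 1 := by
    have hstep : g * B = ∑ p ∈ Finset.range s, ((-u) ^ p - (-u) ^ (p + 1)) := by
      rw [hg1, add_mul, one_mul, hB, Finset.mul_sum, ← Finset.sum_add_distrib]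
      refine Finset.sum_congr rfl fun p _ => ?_
      have hcm : u * (-u) ^ p = -((-u) ^ (p + 1)) := by
        rw [pow_succ', neg_mul, neg_neg]
      rw [hcm, sub_eq_add_neg]
    rw [hstep, Finset.sum_range_sub', pow_zero, hnus, sub_zero]
  have hinv : g⁻¹ = B := Matrix.inv_eq_right_inv hkey
  rw [hinv]
  constructor
  · intro i
    rw [hB, Matrix.sum_apply]
    rw [Finset.sum_eq_single 0]
    · simp
    · intro p _ hp
      exact SB_pow hSB' p i i (by omega)
    · intro h0
      exact absurd (Finset.mem_range.2 (s_pos hsum i)) h0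
  · intro i j hij hm
    rw [hB, Matrix.sum_apply]
    refine Finset.sum_eq_zero fun p _ => ?_
    have hblk : ¬ blockOf r s (i : ℕ) < blockOf r s (j : ℕ) := fun h => hm (mem_Mset.2 h)
    rcases Nat.eq_zero_or_pos p with hp | hp
    · subst hp; simp [Matrix.one_apply_ne hij]
    · exact SB_pow hSB' p i j (by omega)

/-- The conjugated matrix of variables. -/
noncomputable def Ymat (K : Type) [Field K] (r : ℕ → ℕ) (s n : ℕ)
    (g : Matrix (Fin n) (Fin n) K) : Matrix (Fin n) (Fin n) (Rpoly K r s n) :=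
  (g⁻¹).map (fun a => (MvPolynomial.C a : Rpoly K r s n)) * Xmat K r s n *
    g.map (fun a => (MvPolynomial.C a : Rpoly K r s n))

lemma adjAct_X {g : Matrix (Fin n) (Fin n) K} (v : {p : Fin n × Fin n // p ∈ Mset r s n}) :
    adjAct K r s n g (MvPolynomial.X v) = Ymat K r s n g v.1.1 v.1.2 := by
  rw [adjAct, MvPolynomial.aeval_X]; rfl

lemma Ymat_apply (g : Matrix (Fin n) (Fin n) K) (i j : Fin n) :
    Ymat K r s n g i j =
      ∑ k : Fin n, ∑ l : Fin n,
        MvPolynomial.C (g⁻¹ i k) * Xmat K r s n k l * MvPolynomial.C (g l j) := by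
  rw [Ymat, Matrix.mul_apply]
  simp only [Matrix.mul_apply, Matrix.map_apply, Finset.sum_mul]
  exact Finset.sum_comm

lemma Xmat_off {k l : Fin n} (hc : ¬ blockOf r s (k : ℕ) < blockOf r s (l : ℕ)) :
    Xmat K r s n k l = 0 := by
  have hm : (k, l) ∉ Mset r s n := fun hm => hc (mem_Mset.1 hm)
  show (if h : (k, l) ∈ Mset r s n then MvPolynomial.X ⟨(k, l), h⟩ else 0 :
    Rpoly K r s n) = 0
  rw [dif_neg hm]

lemma Xmat_ne {k l : Fin n} (h : Xmat K r s n k l ≠ 0) :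
    blockOf r s (k : ℕ) < blockOf r s (l : ℕ) := by
  by_contra hc
  exact h (Xmat_off hc)

lemma term_ne {g : Matrix (Fin n) (Fin n) K} (hg : InU r s n g) (hg' : InU r s n g⁻¹)
    {i j k l : Fin n}
    (hne : MvPolynomial.C (g⁻¹ i k) * Xmat K r s n k l * MvPolynomial.C (g l j)
      ≠ (0 : Rpoly K r s n)) :
    (k = i ∨ blockOf r s (i : ℕ) < blockOf r s (k : ℕ)) ∧
      blockOf r s (k : ℕ) < blockOf r s (l : ℕ) ∧
      (l = j ∨ blockOf r s (l : ℕ) < blockOf r s (j : ℕ)) := by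
  refine ⟨?_, ?_, ?_⟩
  · by_contra hc
    push_neg at hc
    have : g⁻¹ i k = 0 :=
      hg'.2 i k (fun h => hc.1 h.symm) fun hm => absurd (mem_Mset.1 hm) (not_lt.2 hc.2)
    exact hne (by rw [this, map_zero, zero_mul, zero_mul])
  · refine Xmat_ne (K := K) (r := r) (s := s) fun h0 => hne ?_
    rw [h0, mul_zero, zero_mul]
  · by_contra hc
    push_neg at hc
    have : g l j = 0 :=
      hg.2 l j (fun h => hc.1 h) fun hm => absurd (mem_Mset.1 hm) (not_lt.2 hc.2)
    exact hne (by rw [this, map_zero, mul_zero])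

lemma Ymat_off {g : Matrix (Fin n) (Fin n) K} (hg : InU r s n g) (hg' : InU r s n g⁻¹)
    {i j : Fin n} (h : ¬ blockOf r s (i : ℕ) < blockOf r s (j : ℕ)) :
    Ymat K r s n g i j = 0 := by
  rw [Ymat_apply]
  refine Finset.sum_eq_zero fun k _ => Finset.sum_eq_zero fun l _ => ?_
  by_contra hne
  obtain ⟨h1, h2, h3⟩ := term_ne hg hg' hne
  have e1 : blockOf r s (i : ℕ) ≤ blockOf r s (k : ℕ) := by
    rcases h1 with h1 | h1
    · rw [h1]
    · omega
  have e3 : blockOf r s (l : ℕ) ≤ blockOf r s (j : ℕ) := by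
    rcases h3 with h3 | h3
    · rw [h3]
    · omega
  omega

lemma Ymat_restrict {g : Matrix (Fin n) (Fin n) K} (hg : InU r s n g) (hg' : InU r s n g⁻¹)
    (lo hi : ℕ) (I J : Finset (Fin n))
    (hI1 : ∀ i ∈ I, lo ≤ blockOf r s (i : ℕ))
    (hJ1 : ∀ j ∈ J, blockOf r s (j : ℕ) ≤ hi)
    (hImid : ∀ k : Fin n, lo < blockOf r s (k : ℕ) → blockOf r s (k : ℕ) < hi → k ∈ I)
    (hJmid : ∀ k : Fin n, lo < blockOf r s (k : ℕ) → blockOf r s (k : ℕ) < hi → k ∈ J)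
    {i j : Fin n} (hiI : i ∈ I) (hjJ : j ∈ J) :
    Ymat K r s n g i j =
      ∑ k ∈ I, ∑ l ∈ J,
        MvPolynomial.C (g⁻¹ i k) * Xmat K r s n k l * MvPolynomial.C (g l j) := by
  rw [Ymat_apply]
  rw [← Finset.sum_subset (Finset.subset_univ I) ?hk]
  case hk =>
    intro k _ hkI
    refine Finset.sum_eq_zero fun l _ => ?_
    by_contra hne
    obtain ⟨h1, h2, h3⟩ := term_ne hg hg' hne
    rcases h1 with h1 | h1
    · exact hkI (h1 ▸ hiI)
    have e3 : blockOf r s (l : ℕ) ≤ hi := by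
      rcases h3 with h3 | h3
      · rw [h3]; exact hJ1 j hjJ
      · exact le_of_lt (lt_of_lt_of_le h3 (hJ1 j hjJ))
    exact hkI (hImid k (lt_of_le_of_lt (hI1 i hiI) h1) (by omega))
  refine Finset.sum_congr rfl fun k hkI => ?_
  rw [← Finset.sum_subset (Finset.subset_univ J) ?hl]
  case hl =>
    intro l _ hlJ
    by_contra hne
    obtain ⟨h1, h2, h3⟩ := term_ne hg hg' hne
    rcases h3 with h3 | h3
    · exact hlJ (h3 ▸ hjJ)
    have e1 : lo ≤ blockOf r s (k : ℕ) := by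
      rcases h1 with h1 | h1
      · rw [h1]; exact hI1 i hiI
      · exact le_of_lt (lt_of_le_of_lt (hI1 i hiI) h1)
    have e2 : blockOf r s (j : ℕ) ≤ hi := hJ1 j hjJ
    exact hlJ (hJmid l (by omega) (by omega))

lemma sum_orderIso {M : Type} [AddCommMonoid M] {m : ℕ} (I : Finset (Fin n))
    (e : Fin m ≃o {x // x ∈ I}) (F : Fin n → M) :
    ∑ k ∈ I, F k = ∑ p : Fin m, F (e p) := by
  rw [← Finset.sum_coe_sort I F]
  exact (Equiv.sum_comp e.toEquiv fun x => F x).symm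

lemma adj_minorDet {g : Matrix (Fin n) (Fin n) K} (hg : InU r s n g) (hg' : InU r s n g⁻¹)
    (I J : Finset (Fin n)) :
    adjAct K r s n g (minorDet (Xmat K r s n) I J) = minorDet (Ymat K r s n g) I J := by
  unfold minorDet
  by_cases hC : J.card = I.card
  · rw [dif_pos hC, dif_pos hC]
    rw [AlgHom.map_det]
    congr 1
    refine Matrix.ext fun p q => ?_
    simp only [AlgHom.mapMatrix_apply, Matrix.map_apply, Matrix.of_apply]
    set i : Fin n := ((I.orderIsoOfFin rfl p) : Fin n)
    set j : Fin n := ((J.orderIsoOfFin hC q) : Fin n)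
    by_cases hm : (i, j) ∈ Mset r s n
    · have hx : Xmat K r s n i j = MvPolynomial.X ⟨(i, j), hm⟩ := by
        show (if h : (i, j) ∈ Mset r s n then MvPolynomial.X ⟨(i, j), h⟩ else 0 :
          Rpoly K r s n) = _
        rw [dif_pos hm]
      rw [hx]
      exact adjAct_X (K := K) (r := r) (s := s) (g := g) ⟨(i, j), hm⟩
    · rw [Xmat_off (K := K) fun h => hm (mem_Mset.2 h), map_zero,
        Ymat_off hg hg' fun h => hm (mem_Mset.2 h)]
  · rw [dif_neg hC, dif_neg hC, map_zero]

lemma minor_invariant {g : Matrix (Fin n) (Fin n) K} (hg : InU r s n g)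
    (hg' : InU r s n g⁻¹) (lo hi : ℕ) (I J : Finset (Fin n)) (hC : J.card = I.card)
    (hI1 : ∀ i ∈ I, lo ≤ blockOf r s (i : ℕ))
    (hJ1 : ∀ j ∈ J, blockOf r s (j : ℕ) ≤ hi)
    (hImid : ∀ k : Fin n, lo < blockOf r s (k : ℕ) → blockOf r s (k : ℕ) < hi → k ∈ I)
    (hJmid : ∀ k : Fin n, lo < blockOf r s (k : ℕ) → blockOf r s (k : ℕ) < hi → k ∈ J) :
    minorDet (Ymat K r s n g) I J = minorDet (Xmat K r s n) I J := by
  unfold minorDet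
  rw [dif_pos hC, dif_pos hC]
  set e := I.orderIsoOfFin rfl with he
  set f := J.orderIsoOfFin hC with hf
  set A : Matrix (Fin I.card) (Fin I.card) (Rpoly K r s n) :=
    Matrix.of fun p q => MvPolynomial.C (g⁻¹ (e p : Fin n) (e q : Fin n)) with hA
  set Cm : Matrix (Fin I.card) (Fin I.card) (Rpoly K r s n) :=
    Matrix.of fun p q => MvPolynomial.C (g (f p : Fin n) (f q : Fin n)) with hCm
  set D : Matrix (Fin I.card) (Fin I.card) (Rpoly K r s n) :=
    Matrix.of fun p q => Xmat K r s n (e p : Fin n) (f q : Fin n) with hD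
  have hprod : (Matrix.of fun p q : Fin I.card =>
      Ymat K r s n g (e p : Fin n) (f q : Fin n)) = A * D * Cm := by
    refine Matrix.ext fun p q => ?_
    rw [Matrix.of_apply,
      Ymat_restrict hg hg' lo hi I J hI1 hJ1 hImid hJmid
        (e p).2 (f q).2]
    rw [sum_orderIso I e]
    have hinner : ∀ p' : Fin I.card,
        (∑ l ∈ J, MvPolynomial.C (g⁻¹ (e p : Fin n) (e p' : Fin n)) *
          Xmat K r s n (e p' : Fin n) l * MvPolynomial.C (g l (f q : Fin n))) =
        ∑ q' : Fin I.card, MvPolynomial.C (g⁻¹ (e p : Fin n) (e p' : Fin n)) *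
          Xmat K r s n (e p' : Fin n) (f q' : Fin n) *
          MvPolynomial.C (g (f q' : Fin n) (f q : Fin n)) := fun p' =>
      sum_orderIso J f _
    simp only [hinner]
    simp only [Matrix.mul_apply, Finset.sum_mul, hA, hD, hCm, Matrix.of_apply]
    rw [Finset.sum_comm]
  have hdetA : A.det = 1 := by
    have ht : A.BlockTriangular id := by
      intro p q hpq
      have hlt : (e q : Fin n) < (e p : Fin n) := by
        exact_mod_cast e.lt_iff_lt.2 hpq
      have hne : (e p : Fin n) ≠ (e q : Fin n) := (ne_of_lt hlt).symm
      have hblk : ((e p : Fin n), (e q : Fin n)) ∉ Mset r s n := by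
        rw [mem_Mset]
        exact not_lt.2 (blockOf_mono r s (le_of_lt (by exact_mod_cast hlt)))
      show MvPolynomial.C (g⁻¹ (e p : Fin n) (e q : Fin n)) = 0
      rw [hg'.2 _ _ hne hblk, map_zero]
    rw [Matrix.det_of_upperTriangular ht]
    have : ∀ p : Fin I.card, A p p = 1 := fun p => by
      show MvPolynomial.C (g⁻¹ (e p : Fin n) (e p : Fin n)) = 1
      rw [hg'.1, map_one]
    simp [this]
  have hdetC : Cm.det = 1 := by
    have ht : Cm.BlockTriangular id := by
      intro p q hpq
      have hlt : (f q : Fin n) < (f p : Fin n) := by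
        exact_mod_cast f.lt_iff_lt.2 hpq
      have hne : (f p : Fin n) ≠ (f q : Fin n) := (ne_of_lt hlt).symm
      have hblk : ((f p : Fin n), (f q : Fin n)) ∉ Mset r s n := by
        rw [mem_Mset]
        exact not_lt.2 (blockOf_mono r s (le_of_lt (by exact_mod_cast hlt)))
      show MvPolynomial.C (g (f p : Fin n) (f q : Fin n)) = 0
      rw [hg.2 _ _ hne hblk, map_zero]
    rw [Matrix.det_of_upperTriangular ht]
    have : ∀ p : Fin I.card, Cm p p = 1 := fun p => by
      show MvPolynomial.C (g (f p : Fin n) (f p : Fin n)) = 1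
      rw [hg.1, map_one]
    simp [this]
  rw [hprod, Matrix.det_mul, Matrix.det_mul, hdetA, hdetC, one_mul, mul_one]

/-- The key combinatorial lemma about the base. -/
lemma KLlemma {S : Finset (Fin n × Fin n)} (hS : IsBase (Mset r s n) S)
    {a₀ b₀ : Fin n} (hγ : (a₀, b₀) ∈ S) (k : Fin n)
    (h1 : blockOf r s (a₀ : ℕ) < blockOf r s (k : ℕ))
    (h2 : blockOf r s (k : ℕ) < blockOf r s (b₀ : ℕ)) :
    (∃ i : Fin n, (i, k) ∈ S ∧ a₀ < i) ∧ (∃ j : Fin n, (k, j) ∈ S ∧ j < b₀) := by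
  obtain ⟨hsub, hanti, hcov⟩ := hS
  have hkb : k < b₀ := lt_of_blockOf_lt h2
  have hak : a₀ < k := lt_of_blockOf_lt h1
  constructor
  · have hMak : (a₀, k) ∈ Mset r s n := mem_Mset.2 h1
    have hnotS : (a₀, k) ∉ S := by
      intro hmem
      have hne : ((a₀, b₀) : Fin n × Fin n) ≠ (a₀, k) := fun h =>
        ne_of_gt hkb (congrArg Prod.snd h)
      exact (hanti _ hγ _ hmem hne).1 (Or.inl ⟨rfl, hkb⟩)
    obtain ⟨σ, hσS, hσgt⟩ := hcov _ hMak hnotS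
    rcases hσgt with ⟨hr, hc⟩ | ⟨hr, hc⟩
    · exfalso
      have hne : σ ≠ ((a₀, b₀) : Fin n × Fin n) := by
        intro h; subst h; exact absurd hc (lt_asymm hkb)
      refine (hanti _ hγ _ hσS (Ne.symm hne)).1 ?_
      exact Or.inl ⟨hr, lt_trans hc hkb⟩
    · refine ⟨σ.1, ?_, hc⟩
      have hr' : k = σ.2 := hr
      rwa [show ((σ.1, k) : Fin n × Fin n) = σ by rw [hr']]
  · have hMkb : (k, b₀) ∈ Mset r s n := mem_Mset.2 h2
    have hnotS : (k, b₀) ∉ S := by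
      intro hmem
      have hne : ((a₀, b₀) : Fin n × Fin n) ≠ (k, b₀) := fun h =>
        ne_of_lt hak (congrArg Prod.fst h)
      exact (hanti _ hγ _ hmem hne).1 (Or.inr ⟨rfl, hak⟩)
    obtain ⟨σ, hσS, hσgt⟩ := hcov _ hMkb hnotS
    rcases hσgt with ⟨hr, hc⟩ | ⟨hr, hc⟩
    · refine ⟨σ.2, ?_, hc⟩
      have hr' : k = σ.1 := hr
      rwa [show ((k, σ.2) : Fin n × Fin n) = σ by rw [hr']]
    · exfalso
      have hne : σ ≠ ((a₀, b₀) : Fin n × Fin n) := by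
        intro h; subst h; exact absurd hc (lt_asymm hak)
      refine (hanti _ hγ _ hσS (Ne.symm hne)).1 ?_
      exact Or.inr ⟨hr, lt_trans hak hc⟩

end Stmt10Aux

/-- for every `ξ` in the broad base `T`, the polynomial `N_ξ` is
invariant under the adjoint action of the unipotent radical `U` of `P` on `K[m]`. -/
theorem statement10 (K : Type) [Field K] [IsAlgClosed K] [CharZero K]
    (n s : ℕ) (r : ℕ → ℕ) (hpos : ∀ k < s, 0 < r k) (hsum : Rsum r s = n)
    (S : Finset (Fin n × Fin n)) (hS : IsBase (Mset r s n) S)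
    (ξ : Fin n × Fin n) (hξ : ξ ∈ Tset r s n S)
    (g : Matrix (Fin n) (Fin n) K) (hg : InU r s n g) :
    adjAct K r s n g (Npoly K r s n S ξ) = Npoly K r s n S ξ := by
  have hg' : InU r s n g⁻¹ := InU_inv hsum hg
  -- ξ ∈ M
  have hMξ : ξ ∈ Mset r s n := by
    rcases Finset.mem_union.1 hξ with h | h
    · exact hS.1 h
    · exact (Finset.mem_filter.1 h).1
  have hβξ : blockOf r s (ξ.1 : ℕ) < blockOf r s (ξ.2 : ℕ) := mem_Mset.1 hMξ
  -- find γ = (a₀, b₀) ∈ S dominated by ξ within the same block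
  obtain ⟨a₀, b₀, hγS, haa, hbb, hβa, hβb⟩ :
      ∃ a₀ b₀ : Fin n, (a₀, b₀) ∈ S ∧ ξ.1 ≤ a₀ ∧ b₀ ≤ ξ.2 ∧
        blockOf r s (a₀ : ℕ) = blockOf r s (ξ.1 : ℕ) ∧
        blockOf r s (b₀ : ℕ) = blockOf r s (ξ.2 : ℕ) := by
    rcases Finset.mem_union.1 hξ with h | h
    · exact ⟨ξ.1, ξ.2, by simpa using h, le_refl _, le_refl _, rfl, rfl⟩
    · obtain ⟨-, γ, hγ, hgt, h1, h2⟩ := Finset.mem_filter.1 h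
      rcases hgt with ⟨hr, hc⟩ | ⟨hr, hc⟩
      · exact ⟨γ.1, γ.2, by simpa using hγ, le_of_eq hr, le_of_lt hc,
          by rw [hr], by rw [h2]⟩
      · exact ⟨γ.1, γ.2, by simpa using hγ, le_of_lt hc, le_of_eq hr.symm,
          by rw [h1], by rw [hr]⟩
  rw [Npoly]
  by_cases hMp : ξ ∈ Mprime r s n
  · rw [if_pos hMp]
    -- the minor case
    set I : Finset (Fin n) :=
      insert ξ.1 ((S.filter fun p => ξ.1 < p.1 ∧ p.2 < ξ.2).image Prod.fst) with hI
    set J : Finset (Fin n) :=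
      insert ξ.2 ((S.filter fun p => ξ.1 < p.1 ∧ p.2 < ξ.2).image Prod.snd) with hJ
    have hfstInj : Set.InjOn Prod.fst
        (((S.filter fun p => ξ.1 < p.1 ∧ p.2 < ξ.2) : Finset (Fin n × Fin n)) :
          Set (Fin n × Fin n)) := by
      intro p hp q hq hpq
      simp only [Finset.coe_filter, Set.mem_setOf_eq] at hp hq
      by_contra hne
      have hsnd : p.2 ≠ q.2 := fun h => hne (Prod.ext hpq h)
      rcases lt_or_gt_of_ne hsnd with h | h
      · exact (hS.2.1 p hp.1 q hq.1 hne).2 (Or.inl ⟨hpq.symm, h⟩)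
      · exact (hS.2.1 p hp.1 q hq.1 hne).1 (Or.inl ⟨hpq, h⟩)
    have hsndInj : Set.InjOn Prod.snd
        (((S.filter fun p => ξ.1 < p.1 ∧ p.2 < ξ.2) : Finset (Fin n × Fin n)) :
          Set (Fin n × Fin n)) := by
      intro p hp q hq hpq
      simp only [Finset.coe_filter, Set.mem_setOf_eq] at hp hq
      by_contra hne
      have hfst : p.1 ≠ q.1 := fun h => hne (Prod.ext h hpq)
      rcases lt_or_gt_of_ne hfst with h | h
      · exact (hS.2.1 p hp.1 q hq.1 hne).1 (Or.inr ⟨hpq, h⟩)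
      · exact (hS.2.1 p hp.1 q hq.1 hne).2 (Or.inr ⟨hpq.symm, h⟩)
    have hanotin : ξ.1 ∉ (S.filter fun p => ξ.1 < p.1 ∧ p.2 < ξ.2).image Prod.fst := by
      intro hmem
      obtain ⟨p, hp, hp1⟩ := Finset.mem_image.1 hmem
      exact absurd ((Finset.mem_filter.1 hp).2.1) (by rw [hp1]; exact lt_irrefl _)
    have hbnotin : ξ.2 ∉ (S.filter fun p => ξ.1 < p.1 ∧ p.2 < ξ.2).image Prod.snd := by
      intro hmem
      obtain ⟨p, hp, hp2⟩ := Finset.mem_image.1 hmem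
      exact absurd ((Finset.mem_filter.1 hp).2.2) (by rw [hp2]; exact lt_irrefl _)
    have hC : J.card = I.card := by
      rw [hI, hJ, Finset.card_insert_of_notMem hanotin,
        Finset.card_insert_of_notMem hbnotin,
        Finset.card_image_of_injOn hfstInj, Finset.card_image_of_injOn hsndInj]
    have hI1 : ∀ i ∈ I, blockOf r s (ξ.1 : ℕ) ≤ blockOf r s (i : ℕ) := by
      intro i hiI
      rcases Finset.mem_insert.1 hiI with rfl | hiI
      · exact le_refl _
      · obtain ⟨p, hp, hp1⟩ := Finset.mem_image.1 hiI
        have : ξ.1 < p.1 := (Finset.mem_filter.1 hp).2.1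
        exact blockOf_mono r s (by rw [← hp1]; exact_mod_cast le_of_lt this)
    have hJ1 : ∀ j ∈ J, blockOf r s (j : ℕ) ≤ blockOf r s (ξ.2 : ℕ) := by
      intro j hjJ
      rcases Finset.mem_insert.1 hjJ with rfl | hjJ
      · exact le_refl _
      · obtain ⟨p, hp, hp2⟩ := Finset.mem_image.1 hjJ
        have : p.2 < ξ.2 := (Finset.mem_filter.1 hp).2.2
        exact blockOf_mono r s (by rw [← hp2]; exact_mod_cast le_of_lt this)
    have hImid : ∀ k : Fin n, blockOf r s (ξ.1 : ℕ) < blockOf r s (k : ℕ) →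
        blockOf r s (k : ℕ) < blockOf r s (ξ.2 : ℕ) → k ∈ I := by
      intro k hk1 hk2
      obtain ⟨-, j, hkjS, hjb⟩ := KLlemma hS hγS k (by omega) (by omega)
      refine Finset.mem_insert_of_mem (Finset.mem_image.2 ⟨(k, j), ?_, rfl⟩)
      exact Finset.mem_filter.2 ⟨hkjS, lt_of_blockOf_lt (r := r) (s := s) hk1,
        lt_of_lt_of_le hjb hbb⟩
    have hJmid : ∀ k : Fin n, blockOf r s (ξ.1 : ℕ) < blockOf r s (k : ℕ) →
        blockOf r s (k : ℕ) < blockOf r s (ξ.2 : ℕ) → k ∈ J := by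
      intro k hk1 hk2
      obtain ⟨⟨i, hikS, hai⟩, -⟩ := KLlemma hS hγS k (by omega) (by omega)
      refine Finset.mem_insert_of_mem (Finset.mem_image.2 ⟨(i, k), ?_, rfl⟩)
      exact Finset.mem_filter.2 ⟨hikS, lt_of_le_of_lt haa hai,
        lt_of_blockOf_lt (r := r) (s := s) hk2⟩
    have step1 : adjAct K r s n g (Mminor K r s n S ξ) = minorDet (Ymat K r s n g) I J := by
      rw [Mminor]
      exact adj_minorDet hg hg' I J
    rw [step1, Mminor]
    exact minor_invariant hg hg' (blockOf r s (ξ.1 : ℕ)) (blockOf r s (ξ.2 : ℕ))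
      I J hC hI1 hJ1 hImid hJmid
  · -- the superdiagonal case
    rw [if_neg hMp, dif_pos hMξ]
    have hsd : blockOf r s (ξ.2 : ℕ) = blockOf r s (ξ.1 : ℕ) + 1 := by
      have : ¬ (blockOf r s (ξ.1 : ℕ) + 1 < blockOf r s (ξ.2 : ℕ)) := by
        intro h
        exact hMp (Finset.mem_filter.2 ⟨hMξ, h⟩)
      omega
    have h1 : adjAct K r s n g (MvPolynomial.X ⟨ξ, hMξ⟩) = Ymat K r s n g ξ.1 ξ.2 :=
      adjAct_X _
    rw [h1]
    have h2 := Ymat_restrict (K := K) hg hg' (blockOf r s (ξ.1 : ℕ)) (blockOf r s (ξ.2 : ℕ))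
      {ξ.1} {ξ.2}
      (by intro i hi; rw [Finset.mem_singleton.1 hi])
      (by intro j hj; rw [Finset.mem_singleton.1 hj])
      (by intro k hk1 hk2; omega)
      (by intro k hk1 hk2; omega)
      (Finset.mem_singleton_self _) (Finset.mem_singleton_self _)
    rw [h2, Finset.sum_singleton, Finset.sum_singleton, hg'.1, hg.1, map_one, one_mul,
      mul_one, Xmat, Matrix.of_apply, dif_pos (show (ξ.1, ξ.2) ∈ Mset r s n by
        simpa using hMξ)]
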